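/- Let Z_{n,k} = X_{n,k}·1_{|X_{n,k}|≤τ} − X'_{n,k}·1_{|X'_{n,k}|≤τ} where (X'_{n,k}) is an independent copy of the independent family (X_{n,k})_{k=0}^{k_n}, and let S̃_n = ∑_{k=0}^{k_n} Z_{n,k}. Then E S̃_n^4 ≤ 4τ² E S̃_n² + 3(E S̃_n²)². -/

import Mathlib

open MeasureTheory ProbabilityTheory
open scoped ENNReal

lemma bdd_integrable {Ω : Type*} [MeasureSpace Ω] [IsFiniteMeasure (ℙ : Measure Ω)]
    {f : Ω → ℝ} {C : ℝ} (hf : Measurable f) (hC : ∀ ω, |f ω| ≤ C) :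
    Integrable f ℙ :=
  (integrable_const C).mono' hf.aestronglyMeasurable
    (Filter.Eventually.of_forall fun ω => by simpa [Real.norm_eq_abs] using hC ω)

theorem fourth_moment_aux {Ω : Type*} [MeasureSpace Ω] [IsProbabilityMeasure (ℙ : Measure Ω)]
    {ι : Type*} (c : ℝ) (hc : 0 ≤ c) (Z : ι → Ω → ℝ)
    (hm : ∀ k, Measurable (Z k)) (hbd : ∀ k ω, |Z k ω| ≤ c)
    (hmean : ∀ k, ∫ ω, Z k ω ∂ℙ = 0)
    (hind : ∀ (s : Finset ι) (a : ι), a ∉ s →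
      IndepFun (fun ω => ∑ k ∈ s, Z k ω) (Z a) ℙ)
    (s : Finset ι) :
    ∫ ω, (∑ k ∈ s, Z k ω) ^ 4 ∂ℙ ≤
      c ^ 2 * ∫ ω, (∑ k ∈ s, Z k ω) ^ 2 ∂ℙ + 3 * (∫ ω, (∑ k ∈ s, Z k ω) ^ 2 ∂ℙ) ^ 2 := by
  classical
  -- basic facts
  have hTmeas : ∀ s : Finset ι, Measurable fun ω => ∑ k ∈ s, Z k ω :=
    fun s => Finset.measurable_sum s fun k _ => hm k
  have hTbd : ∀ s : Finset ι, ∀ ω, |∑ k ∈ s, Z k ω| ≤ s.card * c := by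
    intro s ω
    calc |∑ k ∈ s, Z k ω| ≤ ∑ k ∈ s, |Z k ω| := Finset.abs_sum_le_sum_abs _ _
    _ ≤ ∑ _k ∈ s, c := Finset.sum_le_sum fun k _ => hbd k ω
    _ = s.card * c := by simp [mul_comm]
  have hTpow : ∀ (s : Finset ι) (n : ℕ), Integrable (fun ω => (∑ k ∈ s, Z k ω) ^ n) ℙ := by
    intro s n
    refine bdd_integrable ((hTmeas s).pow_const n) (C := (s.card * c) ^ n) fun ω => ?_
    rw [abs_pow]
    exact pow_le_pow_left₀ (abs_nonneg _) (hTbd s ω) n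
  have hZpow : ∀ (a : ι) (n : ℕ), Integrable (fun ω => (Z a ω) ^ n) ℙ := by
    intro a n
    refine bdd_integrable ((hm a).pow_const n) (C := c ^ n) fun ω => ?_
    rw [abs_pow]
    exact pow_le_pow_left₀ (abs_nonneg _) (hbd a ω) n
  have hTmean : ∀ s : Finset ι, ∫ ω, ∑ k ∈ s, Z k ω ∂ℙ = 0 := by
    intro s
    rw [integral_finset_sum s fun k _ => bdd_integrable (hm k) (hbd k)]
    simp [hmean]
  induction s using Finset.induction_on with
  | empty => simp
  | @insert a s ha ih =>
    set T : Ω → ℝ := fun ω => ∑ k ∈ s, Z k ω with hT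
    set W : Ω → ℝ := Z a with hW
    have hsum : ∀ ω, ∑ k ∈ insert a s, Z k ω = T ω + W ω := by
      intro ω; rw [Finset.sum_insert ha]; ring
    have hTW : IndepFun T W ℙ := hind s a ha
    have hprod : ∀ i j : ℕ, ∫ ω, (T ω) ^ i * (W ω) ^ j ∂ℙ =
        (∫ ω, (T ω) ^ i ∂ℙ) * ∫ ω, (W ω) ^ j ∂ℙ := by
      intro i j
      exact (hTW.comp (measurable_id.pow_const i) (measurable_id.pow_const j)).integral_fun_mul_eq_mul_integral
        (hTpow s i).aestronglyMeasurable (hZpow a j).aestronglyMeasurable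
    have hprodint : ∀ i j : ℕ, Integrable (fun ω => (T ω) ^ i * (W ω) ^ j) ℙ := by
      intro i j
      refine bdd_integrable (((hTmeas s).pow_const i).mul ((hm a).pow_const j))
        (C := (s.card * c) ^ i * c ^ j) fun ω => ?_
      rw [abs_mul, abs_pow, abs_pow]
      exact mul_le_mul (pow_le_pow_left₀ (abs_nonneg _) (hTbd s ω) i)
        (pow_le_pow_left₀ (abs_nonneg _) (hbd a ω) j) (by positivity) (by positivity)
    -- expansions
    have e4 : ∫ ω, (∑ k ∈ insert a s, Z k ω) ^ 4 ∂ℙ =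
        (∫ ω, (T ω) ^ 4 ∂ℙ) + 6 * ((∫ ω, (T ω) ^ 2 ∂ℙ) * ∫ ω, (W ω) ^ 2 ∂ℙ)
          + ∫ ω, (W ω) ^ 4 ∂ℙ := by
      have : ∀ ω, (∑ k ∈ insert a s, Z k ω) ^ 4 =
          (T ω) ^ 4 + (4 * ((T ω) ^ 3 * (W ω) ^ 1) + (6 * ((T ω) ^ 2 * (W ω) ^ 2)
            + (4 * ((T ω) ^ 1 * (W ω) ^ 3) + (W ω) ^ 4))) := by
        intro ω; rw [hsum ω]; ring
      simp only [this]
      rw [integral_add (hTpow s 4), integral_add ((hprodint 3 1).const_mul 4),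
        integral_add ((hprodint 2 2).const_mul 6), integral_add ((hprodint 1 3).const_mul 4),
        integral_const_mul _ _, integral_const_mul _ _, integral_const_mul _ _,
        hprod 3 1, hprod 2 2, hprod 1 3]
      · have hW1 : ∫ ω, (W ω) ^ 1 ∂ℙ = 0 := by simpa using hmean a
        have hT1 : ∫ ω, (T ω) ^ 1 ∂ℙ = 0 := by simpa using hTmean s
        rw [hW1, hT1]; ring
      · exact hZpow a 4
      · exact ((hprodint 1 3).const_mul 4).add (hZpow a 4)
      · exact (((hprodint 2 2).const_mul 6)).add (((hprodint 1 3).const_mul 4).add (hZpow a 4))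
      · exact ((hprodint 3 1).const_mul 4).add
          ((((hprodint 2 2).const_mul 6)).add (((hprodint 1 3).const_mul 4).add (hZpow a 4)))
    have e2 : ∫ ω, (∑ k ∈ insert a s, Z k ω) ^ 2 ∂ℙ =
        (∫ ω, (T ω) ^ 2 ∂ℙ) + ∫ ω, (W ω) ^ 2 ∂ℙ := by
      have : ∀ ω, (∑ k ∈ insert a s, Z k ω) ^ 2 =
          (T ω) ^ 2 + (2 * ((T ω) ^ 1 * (W ω) ^ 1) + (W ω) ^ 2) := by
        intro ω; rw [hsum ω]; ring
      simp only [this]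
      rw [integral_add (hTpow s 2), integral_add ((hprodint 1 1).const_mul 2),
        integral_const_mul _ _, hprod 1 1]
      · have hW1 : ∫ ω, (W ω) ^ 1 ∂ℙ = 0 := by simpa using hmean a
        rw [hW1]; ring
      · exact hZpow a 2
      · exact ((hprodint 1 1).const_mul 2).add (hZpow a 2)
    have hW4le : ∫ ω, (W ω) ^ 4 ∂ℙ ≤ c ^ 2 * ∫ ω, (W ω) ^ 2 ∂ℙ := by
      rw [← integral_const_mul _ _]
      refine integral_mono (hZpow a 4) ((hZpow a 2).const_mul _) fun ω => ?_
      have h := abs_le.mp (hbd a ω)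
      nlinarith [sq_le_sq' h.1 h.2, sq_nonneg (Z a ω)]
    have hT2 : 0 ≤ ∫ ω, (T ω) ^ 2 ∂ℙ := integral_nonneg fun ω => by positivity
    have hW2 : 0 ≤ ∫ ω, (W ω) ^ 2 ∂ℙ := integral_nonneg fun ω => by positivity
    rw [e4, e2]
    nlinarith [ih, hT2, hW2, hW4le, sq_nonneg (∫ ω, (W ω) ^ 2 ∂ℙ)]


theorem stmt1 {Ω : Type*} [MeasureSpace Ω] [IsProbabilityMeasure (ℙ : Measure Ω)]
    {m : ℕ} (τ : ℝ) (hτ : 0 < τ) (X X' : Fin m → Ω → ℝ)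
    (hmeas : ∀ k, Measurable (X k)) (hmeas' : ∀ k, Measurable (X' k))
    -- the 2m variables (the X's together with the X''s) are jointly independent
    (hindep : iIndepFun (Sum.elim X X' : Fin m ⊕ Fin m → Ω → ℝ) ℙ)
    -- X' is a copy of X
    (hcopy : ∀ k, Measure.map (X' k) ℙ = Measure.map (X k) ℙ)
    (Z : Fin m → Ω → ℝ)
    (hZ : ∀ k ω, Z k ω =
      (if |X k ω| ≤ τ then X k ω else 0) - (if |X' k ω| ≤ τ then X' k ω else 0))
    (S : Ω → ℝ) (hS : ∀ ω, S ω = ∑ k, Z k ω) :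
    ∫ ω, (S ω) ^ 4 ∂ℙ ≤ 4 * τ ^ 2 * ∫ ω, (S ω) ^ 2 ∂ℙ + 3 * (∫ ω, (S ω) ^ 2 ∂ℙ) ^ 2 := by
  classical
  set trunc : ℝ → ℝ := fun x => if |x| ≤ τ then x else 0 with htrunc
  have htm : Measurable trunc :=
    Measurable.ite (measurableSet_le measurable_id.abs measurable_const)
      measurable_id measurable_const
  have htb : ∀ x, |trunc x| ≤ τ := by
    intro x
    simp only [htrunc]
    split
    · assumption
    · simpa using hτ.le
  have hZ' : ∀ k, Z k = fun ω => trunc (X k ω) - trunc (X' k ω) := by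
    intro k; funext ω; rw [hZ k ω]
  have hZm : ∀ k, Measurable (Z k) := by
    intro k; rw [hZ' k]
    exact (htm.comp (hmeas k)).sub (htm.comp (hmeas' k))
  have hZbd : ∀ k ω, |Z k ω| ≤ 2 * τ := by
    intro k ω
    rw [hZ' k]
    calc |trunc (X k ω) - trunc (X' k ω)| ≤ |trunc (X k ω)| + |trunc (X' k ω)| := abs_sub _ _
    _ ≤ 2 * τ := by linarith [htb (X k ω), htb (X' k ω)]
  have hint : ∀ (g : Fin m → Ω → ℝ) (hg : ∀ k, Measurable (g k)) (k : Fin m),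
      Integrable (fun ω => trunc (g k ω)) ℙ :=
    fun g hg k => bdd_integrable (htm.comp (hg k)) fun ω => htb _
  have hmean : ∀ k, ∫ ω, Z k ω ∂ℙ = 0 := by
    intro k
    rw [hZ' k]
    rw [integral_sub (hint X hmeas k) (hint X' hmeas' k)]
    have h1 : ∫ ω, trunc (X' k ω) ∂ℙ = ∫ x, trunc x ∂(Measure.map (X' k) ℙ) :=
      (integral_map (hmeas' k).aemeasurable htm.aestronglyMeasurable).symm
    have h2 : ∫ ω, trunc (X k ω) ∂ℙ = ∫ x, trunc x ∂(Measure.map (X k) ℙ) :=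
      (integral_map (hmeas k).aemeasurable htm.aestronglyMeasurable).symm
    rw [h1, h2, hcopy k, sub_self]
  have hfmeas : ∀ i : Fin m ⊕ Fin m, Measurable (Sum.elim X X' i) := by
    rintro (k | k)
    · exact hmeas k
    · exact hmeas' k
  have hind : ∀ (s : Finset (Fin m)) (a : Fin m), a ∉ s →
      IndepFun (fun ω => ∑ k ∈ s, Z k ω) (Z a) ℙ := by
    intro s a ha
    set Sl : Finset (Fin m ⊕ Fin m) := s.image Sum.inl ∪ s.image Sum.inr with hSl
    set Tl : Finset (Fin m ⊕ Fin m) := {Sum.inl a, Sum.inr a} with hTl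
    have hdis : Disjoint Sl Tl := by
      simp only [hSl, hTl, Finset.disjoint_left, Finset.mem_union, Finset.mem_image,
        Finset.mem_insert, Finset.mem_singleton]
      rintro x (⟨k, hk, rfl⟩ | ⟨k, hk, rfl⟩) (h | h) <;> simp_all
    have base := hindep.indepFun_finset Sl Tl hdis hfmeas
    have hmemSl : ∀ k : {x // x ∈ s}, Sum.inl k.1 ∈ Sl ∧ Sum.inr k.1 ∈ Sl := fun k =>
      ⟨Finset.mem_union_left _ (Finset.mem_image_of_mem _ k.2),
       Finset.mem_union_right _ (Finset.mem_image_of_mem _ k.2)⟩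
    set ψ : ((i : Sl) → ℝ) → ℝ := fun v =>
      ∑ k ∈ s.attach, (trunc (v ⟨Sum.inl k.1, (hmemSl k).1⟩) - trunc (v ⟨Sum.inr k.1, (hmemSl k).2⟩))
      with hψ
    have hmemT1 : Sum.inl a ∈ Tl := by simp [hTl]
    have hmemT2 : Sum.inr a ∈ Tl := by simp [hTl]
    set χ : ((i : Tl) → ℝ) → ℝ := fun v =>
      trunc (v ⟨Sum.inl a, hmemT1⟩) - trunc (v ⟨Sum.inr a, hmemT2⟩) with hχ
    have hψm : Measurable ψ :=
      Finset.measurable_sum _ fun k _ =>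
        (htm.comp (measurable_pi_apply _)).sub (htm.comp (measurable_pi_apply _))
    have hχm : Measurable χ :=
      (htm.comp (measurable_pi_apply _)).sub (htm.comp (measurable_pi_apply _))
    have key := base.comp hψm hχm
    have h1 : (ψ ∘ fun ω (i : Sl) => Sum.elim X X' i ω) = fun ω => ∑ k ∈ s, Z k ω := by
      funext ω
      simp only [Function.comp, hψ, Sum.elim_inl, Sum.elim_inr]
      rw [Finset.sum_attach s (fun k => trunc (X k ω) - trunc (X' k ω))]
      exact (Finset.sum_congr rfl fun k _ => by rw [hZ' k]).symm
    have h2 : (χ ∘ fun ω (i : Tl) => Sum.elim X X' i ω) = Z a := by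
      funext ω
      simp only [Function.comp, hχ, Sum.elim_inl, Sum.elim_inr]
      rw [hZ' a]
    rwa [h1, h2] at key
  have main := fourth_moment_aux (2 * τ) (by linarith) Z hZm hZbd hmean hind Finset.univ
  simp only [hS]
  calc ∫ ω, (∑ k, Z k ω) ^ 4 ∂ℙ
      ≤ (2 * τ) ^ 2 * ∫ ω, (∑ k, Z k ω) ^ 2 ∂ℙ + 3 * (∫ ω, (∑ k, Z k ω) ^ 2 ∂ℙ) ^ 2 := main
    _ = 4 * τ ^ 2 * ∫ ω, (∑ k, Z k ω) ^ 2 ∂ℙ + 3 * (∫ ω, (∑ k, Z k ω) ^ 2 ∂ℙ) ^ 2 := by ring
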